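/- Let x, y ∈ ℝ^d, 0 < m ≤ c ≤ M, and let A be symmetric with m·I ⪯ A ⪯ M·I. Then m(‖x‖² + ‖y‖²) ≤ xᵀAx + c‖x - y‖² ≤ M(‖x‖² + ‖y‖²). -/

import Mathlib

open Matrix

/-- for `m·I ⪯ A ⪯ M·I` (A symmetric), `0 < m ≤ c ≤ M`, and all
x, y ∈ ℝ^d: `xᵀAx + c‖x - y‖² ≥ (mc/(m + 2c))·(‖x‖² + ‖y‖²)`. -/
theorem stmt_16 (d : ℕ) (m M c : ℝ) (hm : 0 < m) (hmc : m ≤ c) (hcM : c ≤ M)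
    (A : Matrix (Fin d) (Fin d) ℝ) (hA : A.IsSymm)
    (hlow : (A - m • (1 : Matrix (Fin d) (Fin d) ℝ)).PosSemidef)
    (hup : ((M • (1 : Matrix (Fin d) (Fin d) ℝ)) - A).PosSemidef)
    (x y : Fin d → ℝ) :
    m * c / (m + 2 * c) * (x ⬝ᵥ x + y ⬝ᵥ y)
      ≤ x ⬝ᵥ (A *ᵥ x) + c * ((x - y) ⬝ᵥ (x - y)) := by
  set lam := m * c / (m + 2 * c) with hlam
  have hc : 0 < c := lt_of_lt_of_le hm hmc
  have hden : 0 < m + 2 * c := by linarith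
  have hlam_eq : lam * (m + 2 * c) = m * c := by
    rw [hlam, div_mul_cancel₀ _ hden.ne']
  have hlam_pos : 0 < lam := div_pos (mul_pos hm hc) hden
  have hlam_lt : lam < m := by
    rw [hlam, div_lt_iff₀ hden]; nlinarith
  -- lower bound from hlow
  have h1 : m * (x ⬝ᵥ x) ≤ x ⬝ᵥ (A *ᵥ x) := by
    have := hlow.dotProduct_mulVec_nonneg x
    simp only [sub_mulVec, smul_mulVec, one_mulVec, dotProduct_sub,
      dotProduct_smul, star_trivial, smul_eq_mul] at this
    linarith
  have ha : (0:ℝ) ≤ x ⬝ᵥ x := by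
    exact Finset.sum_nonneg fun i _ => mul_self_nonneg (x i)
  have hb : (0:ℝ) ≤ y ⬝ᵥ y := by
    exact Finset.sum_nonneg fun i _ => mul_self_nonneg (y i)
  have hq : (0:ℝ) ≤ (c • x - (c - lam) • y) ⬝ᵥ (c • x - (c - lam) • y) :=
    Finset.sum_nonneg fun i _ => mul_self_nonneg ((c • x - (c - lam) • y) i)
  have hexp : (c • x - (c - lam) • y) ⬝ᵥ (c • x - (c - lam) • y)
      = c^2 * (x ⬝ᵥ x) - 2*c*(c-lam) * (x ⬝ᵥ y) + (c-lam)^2 * (y ⬝ᵥ y) := by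
    simp only [dotProduct_sub, sub_dotProduct, smul_dotProduct, dotProduct_smul,
      smul_eq_mul, dotProduct_comm y x]
    ring
  have hp : (x - y) ⬝ᵥ (x - y) = x ⬝ᵥ x - 2 * (x ⬝ᵥ y) + y ⬝ᵥ y := by
    simp only [dotProduct_sub, sub_dotProduct, dotProduct_comm y x]
    ring
  rw [hexp] at hq
  rw [hp]
  nlinarith [mul_pos hlam_pos hlam_pos, sub_pos.mpr hlam_lt, hq, ha, hb,
    mul_nonneg ha (sub_pos.mpr hlam_lt).le, mul_nonneg hb (sub_pos.mpr hlam_lt).le]
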